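/- (Entropic bilocality inequality, class 9.) Let A₀, A₁, B, C₀, C₁ be jointly distributed random variables taking values in finite sets such that the pair (A₀,A₁) is independent of the pair (C₀,C₁), i.e. H(A₀A₁C₀C₁) = H(A₀A₁) + H(C₀C₁). Then H(A₀) + H(C₀) + H(A₁B) + H(BC₁) + H(A₀BC₀) ≤ H(A₀B) + H(BC₀) + H(A₀BC₁) + H(A₁BC₀). -/

import Mathlib

/-- Shannon entropy (in bits) of a finitely supported weight function,
with the convention `0 * logb 2 0 = 0` (automatic since `Real.logb 2 0 = 0`). -/
noncomputable def shannonEntropy {β : Type*} [Fintype β] (q : β → ℝ) : ℝ :=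
  -∑ b, q b * Real.logb 2 (q b)

/-- Joint Shannon entropy of a random variable `X` on a finite probability space
with weights `p`. -/
noncomputable def jointEntropy {Ω β : Type*} [Fintype Ω] [Fintype β] [DecidableEq β]
    (p : Ω → ℝ) (X : Ω → β) : ℝ :=
  shannonEntropy (fun b => ∑ ω ∈ Finset.univ.filter (fun ω => X ω = b), p ω)

section Aux

variable {Ω β γ δ : Type*} [Fintype Ω] [Fintype β] [DecidableEq β]
  [Fintype γ] [DecidableEq γ] [Fintype δ] [DecidableEq δ]

/-- Weight (pushforward measure) of `X` at `b`. -/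
noncomputable def wtF (p : Ω → ℝ) (X : Ω → β) (b : β) : ℝ :=
  ∑ ω ∈ Finset.univ.filter (fun ω => X ω = b), p ω

lemma wtF_nonneg {p : Ω → ℝ} (hp0 : ∀ ω, 0 ≤ p ω) (X : Ω → β) (b : β) :
    0 ≤ wtF p X b :=
  Finset.sum_nonneg fun ω _ => hp0 ω

lemma self_le_wtF {p : Ω → ℝ} (hp0 : ∀ ω, 0 ≤ p ω) (X : Ω → β) (ω : Ω) :
    p ω ≤ wtF p X (X ω) := by
  apply Finset.single_le_sum (fun ω _ => hp0 ω)
  simp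

lemma sum_wtF_mul (p : Ω → ℝ) (X : Ω → β) (f : β → ℝ) :
    ∑ b, wtF p X b * f b = ∑ ω, p ω * f (X ω) := by
  unfold wtF
  rw [← Finset.sum_fiberwise Finset.univ X (fun ω => p ω * f (X ω))]
  refine Finset.sum_congr rfl fun b _ => ?_
  rw [Finset.sum_mul]
  refine Finset.sum_congr rfl fun ω hω => ?_
  rw [(Finset.mem_filter.1 hω).2]

lemma sum_wtF (p : Ω → ℝ) (X : Ω → β) : ∑ b, wtF p X b = ∑ ω, p ω := by
  simpa using sum_wtF_mul p X (fun _ => 1)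

lemma jointEntropy_eq_sum (p : Ω → ℝ) (X : Ω → β) :
    jointEntropy p X = -(∑ ω, p ω * Real.log (wtF p X (X ω))) / Real.log 2 := by
  have h1 : jointEntropy p X = -∑ b, wtF p X b * (Real.log (wtF p X b) / Real.log 2) := by
    simp only [jointEntropy, shannonEntropy, wtF, Real.logb]
  rw [h1, sum_wtF_mul p X (fun b => Real.log (wtF p X b) / Real.log 2)]
  simp_rw [← mul_div_assoc]
  rw [← Finset.sum_div, neg_div]

lemma sum_wtF_pair (p : Ω → ℝ) (X : Ω → β) (Z : Ω → δ) (z : δ) :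
    ∑ x, wtF p (fun ω => (X ω, Z ω)) (x, z) = wtF p Z z := by
  unfold wtF
  have h : ∀ x : β, (Finset.univ.filter (fun ω => (X ω, Z ω) = (x, z)))
      = (Finset.univ.filter (fun ω => Z ω = z)).filter (fun ω => X ω = x) := by
    intro x
    rw [Finset.filter_filter]
    apply Finset.filter_congr
    intro ω _
    simp only [Prod.mk.injEq]
    tauto
  simp_rw [h]
  exact Finset.sum_fiberwise_of_maps_to (fun ω _ => Finset.mem_univ (X ω)) _

/-- Monotonicity of entropy under mappings: `H(g ∘ X) ≤ H(X)`. -/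
lemma jointEntropy_comp_le (p : Ω → ℝ) (hp0 : ∀ ω, 0 ≤ p ω) (X : Ω → β) (g : β → γ) :
    jointEntropy p (fun ω => g (X ω)) ≤ jointEntropy p X := by
  rw [jointEntropy_eq_sum, jointEntropy_eq_sum]
  have h2 : (0:ℝ) < Real.log 2 := Real.log_pos (by norm_num)
  rw [div_le_div_iff_of_pos_right h2, neg_le_neg_iff]
  refine Finset.sum_le_sum fun ω _ => ?_
  rcases eq_or_lt_of_le (hp0 ω) with h | h
  · rw [← h]; simp
  · refine mul_le_mul_of_nonneg_left ?_ (le_of_lt h)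
    refine Real.log_le_log (lt_of_lt_of_le h (self_le_wtF hp0 X ω)) ?_
    apply Finset.sum_le_sum_of_subset_of_nonneg
    · intro ω' hω'
      simp only [Finset.mem_filter, Finset.mem_univ, true_and] at hω' ⊢
      rw [hω']
    · intro ω' _ _; exact hp0 ω'

/-- Invariance of entropy under injective relabelings. -/
lemma jointEntropy_comp_eq (p : Ω → ℝ) (hp0 : ∀ ω, 0 ≤ p ω) (X : Ω → β)
    (g : β → γ) (h : γ → β) (hgh : ∀ b, h (g b) = b) :
    jointEntropy p (fun ω => g (X ω)) = jointEntropy p X := by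
  refine le_antisymm (jointEntropy_comp_le p hp0 X g) ?_
  have := jointEntropy_comp_le p hp0 (fun ω => g (X ω)) h
  have hX : (fun ω => h (g (X ω))) = X := by funext ω; rw [hgh]
  rwa [hX] at this

/-- Submodularity: `H(X,Y,Z) + H(Z) ≤ H(X,Z) + H(Y,Z)`. -/
lemma jointEntropy_submod (p : Ω → ℝ) (hp0 : ∀ ω, 0 ≤ p ω)
    (X : Ω → β) (Y : Ω → γ) (Z : Ω → δ) :
    jointEntropy p (fun ω => (X ω, Y ω, Z ω)) + jointEntropy p Z ≤
      jointEntropy p (fun ω => (X ω, Z ω)) + jointEntropy p (fun ω => (Y ω, Z ω)) := by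
  have h2 : (0:ℝ) < Real.log 2 := Real.log_pos (by norm_num)
  set wXZ := wtF p (fun ω => (X ω, Z ω)) with hwXZ
  set wYZ := wtF p (fun ω => (Y ω, Z ω)) with hwYZ
  set wZ := wtF p Z with hwZ
  set u := wtF p (fun ω => (X ω, Y ω, Z ω)) with hu
  -- the ratio
  set r : Ω → ℝ := fun ω =>
    wXZ (X ω, Z ω) * wYZ (Y ω, Z ω) / (wZ (Z ω) * u (X ω, Y ω, Z ω)) with hr
  -- pointwise log identity and bound
  have key : ∀ ω, p ω * Real.log (wXZ (X ω, Z ω)) + p ω * Real.log (wYZ (Y ω, Z ω))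
      - p ω * Real.log (wZ (Z ω)) - p ω * Real.log (u (X ω, Y ω, Z ω))
      ≤ p ω * r ω - p ω := by
    intro ω
    rcases eq_or_lt_of_le (hp0 ω) with h | h
    · rw [← h]; simp
    · have pXZ : 0 < wXZ (X ω, Z ω) := lt_of_lt_of_le h (self_le_wtF hp0 _ ω)
      have pYZ : 0 < wYZ (Y ω, Z ω) := lt_of_lt_of_le h (self_le_wtF hp0 _ ω)
      have pZ : 0 < wZ (Z ω) := lt_of_lt_of_le h (self_le_wtF hp0 _ ω)
      have pU : 0 < u (X ω, Y ω, Z ω) := lt_of_lt_of_le h (self_le_wtF hp0 _ ω)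
      have hrpos : 0 < r ω := by
        rw [hr]; positivity
      have hlog : Real.log (r ω) = Real.log (wXZ (X ω, Z ω)) + Real.log (wYZ (Y ω, Z ω))
          - Real.log (wZ (Z ω)) - Real.log (u (X ω, Y ω, Z ω)) := by
        rw [hr, Real.log_div (by positivity) (by positivity),
          Real.log_mul pXZ.ne' pYZ.ne', Real.log_mul pZ.ne' pU.ne']
        ring
      have hb := Real.log_le_sub_one_of_pos hrpos
      have := mul_le_mul_of_nonneg_left hb h.le
      rw [hlog] at this
      nlinarith
  -- sum bound on ∑ p r
  have hsum_r : ∑ ω, p ω * r ω ≤ ∑ ω, p ω := by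
    have hstep : ∑ ω, p ω * r ω
        = ∑ t : β × γ × δ, u t * (wXZ (t.1, t.2.2) * wYZ (t.2.1, t.2.2)
            / (wZ t.2.2 * u t)) := by
      rw [hu, sum_wtF_mul p (fun ω => (X ω, Y ω, Z ω))
        (fun t => wXZ (t.1, t.2.2) * wYZ (t.2.1, t.2.2) / (wZ t.2.2 * u t))]
    rw [hstep]
    have hstep2 : ∀ t : β × γ × δ,
        u t * (wXZ (t.1, t.2.2) * wYZ (t.2.1, t.2.2) / (wZ t.2.2 * u t))
        ≤ wXZ (t.1, t.2.2) * wYZ (t.2.1, t.2.2) / wZ t.2.2 := by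
      intro t
      have hA : 0 ≤ wXZ (t.1, t.2.2) * wYZ (t.2.1, t.2.2) :=
        mul_nonneg (wtF_nonneg hp0 _ _) (wtF_nonneg hp0 _ _)
      have hC : 0 ≤ wZ t.2.2 := wtF_nonneg hp0 _ _
      rcases eq_or_ne (u t) 0 with h0 | h0
      · rw [h0, zero_mul]; positivity
      · rcases eq_or_ne (wZ t.2.2) 0 with hB | hB
        · rw [hB]; simp
        · have heq : u t * (wXZ (t.1, t.2.2) * wYZ (t.2.1, t.2.2) / (wZ t.2.2 * u t))
              = wXZ (t.1, t.2.2) * wYZ (t.2.1, t.2.2) / wZ t.2.2 := by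
            field_simp
          rw [heq]
    refine le_trans (Finset.sum_le_sum fun t _ => hstep2 t) ?_
    have hre : ∑ t : β × γ × δ, wXZ (t.1, t.2.2) * wYZ (t.2.1, t.2.2) / wZ t.2.2
        = ∑ s : δ × β × γ, wXZ (s.2.1, s.1) * wYZ (s.2.2, s.1) / wZ s.1 := by
      apply Fintype.sum_equiv
        ⟨fun t : β × γ × δ => (t.2.2, t.1, t.2.1),
         fun s : δ × β × γ => (s.2.1, s.2.2, s.1),
         fun t => rfl, fun s => rfl⟩
      intro t
      rfl
    rw [hre]
    have hsplit : ∀ z : δ, ∑ s : β × γ, wXZ (s.1, z) * wYZ (s.2, z) / wZ z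
        = wZ z * wZ z / wZ z := by
      intro z
      rw [Fintype.sum_prod_type]
      simp_rw [mul_div_assoc, ← Finset.mul_sum, ← Finset.sum_div]
      rw [← Finset.sum_mul, hwXZ, hwYZ]
      rw [sum_wtF_pair p X Z z, sum_wtF_pair p Y Z z, ← hwZ]
    rw [Fintype.sum_prod_type]
    simp_rw [hsplit]
    have hend : ∀ z : δ, wZ z * wZ z / wZ z ≤ wZ z := by
      intro z
      rcases eq_or_ne (wZ z) 0 with h0 | h0
      · rw [h0]; simp
      · rw [mul_div_assoc, div_self h0, mul_one]
    refine le_trans (Finset.sum_le_sum fun z _ => hend z) ?_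
    rw [hwZ, sum_wtF]
  -- assemble
  have h3 : ∑ ω, (p ω * Real.log (wXZ (X ω, Z ω)) + p ω * Real.log (wYZ (Y ω, Z ω))
      - p ω * Real.log (wZ (Z ω)) - p ω * Real.log (u (X ω, Y ω, Z ω)))
      ≤ ∑ ω, (p ω * r ω - p ω) := Finset.sum_le_sum fun ω _ => key ω
  have hfin : ∑ ω, p ω * Real.log (wXZ (X ω, Z ω))
      + ∑ ω, p ω * Real.log (wYZ (Y ω, Z ω))
      ≤ ∑ ω, p ω * Real.log (u (X ω, Y ω, Z ω))
      + ∑ ω, p ω * Real.log (wZ (Z ω)) := by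
    have e1 : ∑ ω, (p ω * Real.log (wXZ (X ω, Z ω)) + p ω * Real.log (wYZ (Y ω, Z ω))
        - p ω * Real.log (wZ (Z ω)) - p ω * Real.log (u (X ω, Y ω, Z ω)))
        = ∑ ω, p ω * Real.log (wXZ (X ω, Z ω)) + ∑ ω, p ω * Real.log (wYZ (Y ω, Z ω))
        - ∑ ω, p ω * Real.log (wZ (Z ω)) - ∑ ω, p ω * Real.log (u (X ω, Y ω, Z ω)) := by
      rw [Finset.sum_sub_distrib, Finset.sum_sub_distrib, Finset.sum_add_distrib]
    rw [e1, Finset.sum_sub_distrib] at h3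
    linarith
  rw [jointEntropy_eq_sum p (fun ω => (X ω, Y ω, Z ω)), jointEntropy_eq_sum p Z,
    jointEntropy_eq_sum p (fun ω => (X ω, Z ω)), jointEntropy_eq_sum p (fun ω => (Y ω, Z ω))]
  simp only [← hwXZ, ← hwYZ, ← hwZ, ← hu]
  rw [← add_div, ← add_div, div_le_div_iff_of_pos_right h2]
  linarith

end Aux

/-- Entropic bilocality inequality (class 9 of Table II): for jointly distributed
finite random variables `A₀, A₁, B, C₀, C₁` with `(A₀,A₁)` independent of `(C₀,C₁)`
(in the entropic sense `H(A₀A₁C₀C₁) = H(A₀A₁) + H(C₀C₁)`), one has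
`H(A₀) + H(C₀) + H(A₁B) + H(BC₁) + H(A₀BC₀) ≤ H(A₀B) + H(BC₀) + H(A₀BC₁) + H(A₁BC₀)`. -/
theorem entropic_bilocality_class9 {Ω α₀ α₁ β γ₀ γ₁ : Type*} [Fintype Ω]
    [Fintype α₀] [DecidableEq α₀] [Fintype α₁] [DecidableEq α₁]
    [Fintype β] [DecidableEq β]
    [Fintype γ₀] [DecidableEq γ₀] [Fintype γ₁] [DecidableEq γ₁]
    (p : Ω → ℝ) (hp0 : ∀ ω, 0 ≤ p ω) (hp1 : ∑ ω, p ω = 1)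
    (A₀ : Ω → α₀) (A₁ : Ω → α₁) (B : Ω → β) (C₀ : Ω → γ₀) (C₁ : Ω → γ₁)
    (hind : jointEntropy p (fun ω => (A₀ ω, A₁ ω, C₀ ω, C₁ ω)) =
      jointEntropy p (fun ω => (A₀ ω, A₁ ω)) + jointEntropy p (fun ω => (C₀ ω, C₁ ω))) :
    jointEntropy p A₀ +
      jointEntropy p C₀ +
      jointEntropy p (fun ω => (A₁ ω, B ω)) +
      jointEntropy p (fun ω => (B ω, C₁ ω)) +
      jointEntropy p (fun ω => (A₀ ω, B ω, C₀ ω)) ≤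
      jointEntropy p (fun ω => (A₀ ω, B ω)) +
      jointEntropy p (fun ω => (B ω, C₀ ω)) +
      jointEntropy p (fun ω => (A₀ ω, B ω, C₁ ω)) +
      jointEntropy p (fun ω => (A₁ ω, B ω, C₀ ω)) := by
  -- monotonicity : H(A₀A₁C₀C₁) ≤ H(A₀A₁BC₀C₁)
  have hM : jointEntropy p (fun ω => (A₀ ω, A₁ ω, C₀ ω, C₁ ω)) ≤
      jointEntropy p (fun ω => (A₀ ω, A₁ ω, B ω, C₀ ω, C₁ ω)) :=
    jointEntropy_comp_le p hp0 (fun ω => (A₀ ω, A₁ ω, B ω, C₀ ω, C₁ ω))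
      (fun t => (t.1, t.2.1, t.2.2.2))
  -- reordering equalities
  have e1 : jointEntropy p (fun ω => (A₀ ω, C₀ ω, A₁ ω, B ω)) =
      jointEntropy p (fun ω => (A₀ ω, A₁ ω, B ω, C₀ ω)) :=
    jointEntropy_comp_eq p hp0 (fun ω => (A₀ ω, A₁ ω, B ω, C₀ ω))
      (fun t => (t.1, t.2.2.2, t.2.1, t.2.2.1))
      (fun t => (t.1, t.2.2.1, t.2.2.2, t.2.1)) (fun _ => rfl)
  have e2 : jointEntropy p (fun ω => (C₀ ω, A₁ ω, B ω)) =
      jointEntropy p (fun ω => (A₁ ω, B ω, C₀ ω)) :=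
    jointEntropy_comp_eq p hp0 (fun ω => (A₁ ω, B ω, C₀ ω))
      (fun t => (t.2.2, t.1, t.2.1)) (fun t => (t.2.1, t.2.2, t.1)) (fun _ => rfl)
  have e3 : jointEntropy p (fun ω => (A₀ ω, C₀ ω, B ω, C₁ ω)) =
      jointEntropy p (fun ω => (A₀ ω, B ω, C₀ ω, C₁ ω)) :=
    jointEntropy_comp_eq p hp0 (fun ω => (A₀ ω, B ω, C₀ ω, C₁ ω))
      (fun t => (t.1, t.2.2.1, t.2.1, t.2.2.2))
      (fun t => (t.1, t.2.2.1, t.2.1, t.2.2.2)) (fun _ => rfl)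
  have e4 : jointEntropy p (fun ω => (C₀ ω, B ω, C₁ ω)) =
      jointEntropy p (fun ω => (B ω, C₀ ω, C₁ ω)) :=
    jointEntropy_comp_eq p hp0 (fun ω => (B ω, C₀ ω, C₁ ω))
      (fun t => (t.2.1, t.1, t.2.2)) (fun t => (t.2.1, t.1, t.2.2)) (fun _ => rfl)
  have e5 : jointEntropy p (fun ω => (A₁ ω, B ω, A₀ ω)) =
      jointEntropy p (fun ω => (A₀ ω, A₁ ω, B ω)) :=
    jointEntropy_comp_eq p hp0 (fun ω => (A₀ ω, A₁ ω, B ω))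
      (fun t => (t.2.1, t.2.2, t.1)) (fun t => (t.2.2, t.1, t.2.1)) (fun _ => rfl)
  have e6 : jointEntropy p (fun ω => (A₁ ω, A₀ ω)) =
      jointEntropy p (fun ω => (A₀ ω, A₁ ω)) :=
    jointEntropy_comp_eq p hp0 (fun ω => (A₀ ω, A₁ ω))
      (fun t => (t.2, t.1)) (fun t => (t.2, t.1)) (fun _ => rfl)
  have e7 : jointEntropy p (fun ω => (B ω, A₀ ω)) =
      jointEntropy p (fun ω => (A₀ ω, B ω)) :=
    jointEntropy_comp_eq p hp0 (fun ω => (A₀ ω, B ω))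
      (fun t => (t.2, t.1)) (fun t => (t.2, t.1)) (fun _ => rfl)
  have e8 : jointEntropy p (fun ω => (A₁ ω, C₁ ω, A₀ ω, B ω, C₀ ω)) =
      jointEntropy p (fun ω => (A₀ ω, A₁ ω, B ω, C₀ ω, C₁ ω)) :=
    jointEntropy_comp_eq p hp0 (fun ω => (A₀ ω, A₁ ω, B ω, C₀ ω, C₁ ω))
      (fun t => (t.2.1, t.2.2.2.2, t.1, t.2.2.1, t.2.2.2.1))
      (fun s => (s.2.2.1, s.1, s.2.2.2.1, s.2.2.2.2, s.2.1)) (fun _ => rfl)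
  have e9 : jointEntropy p (fun ω => (A₁ ω, A₀ ω, B ω, C₀ ω)) =
      jointEntropy p (fun ω => (A₀ ω, A₁ ω, B ω, C₀ ω)) :=
    jointEntropy_comp_eq p hp0 (fun ω => (A₀ ω, A₁ ω, B ω, C₀ ω))
      (fun t => (t.2.1, t.1, t.2.2)) (fun s => (s.2.1, s.1, s.2.2)) (fun _ => rfl)
  have e10 : jointEntropy p (fun ω => (C₁ ω, A₀ ω, B ω, C₀ ω)) =
      jointEntropy p (fun ω => (A₀ ω, B ω, C₀ ω, C₁ ω)) :=
    jointEntropy_comp_eq p hp0 (fun ω => (A₀ ω, B ω, C₀ ω, C₁ ω))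
      (fun t => (t.2.2.2, t.1, t.2.1, t.2.2.1))
      (fun s => (s.2.1, s.2.2.1, s.2.2.2, s.1)) (fun _ => rfl)
  have e11 : jointEntropy p (fun ω => (B ω, C₁ ω, C₀ ω)) =
      jointEntropy p (fun ω => (B ω, C₀ ω, C₁ ω)) :=
    jointEntropy_comp_eq p hp0 (fun ω => (B ω, C₀ ω, C₁ ω))
      (fun t => (t.1, t.2.2, t.2.1)) (fun t => (t.1, t.2.2, t.2.1)) (fun _ => rfl)
  have e12 : jointEntropy p (fun ω => (C₁ ω, C₀ ω)) =
      jointEntropy p (fun ω => (C₀ ω, C₁ ω)) :=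
    jointEntropy_comp_eq p hp0 (fun ω => (C₀ ω, C₁ ω))
      (fun t => (t.2, t.1)) (fun t => (t.2, t.1)) (fun _ => rfl)
  -- submodularity instances
  have S1 : jointEntropy p (fun ω => (A₀ ω, C₀ ω, A₁ ω, B ω)) +
      jointEntropy p (fun ω => (A₁ ω, B ω)) ≤
      jointEntropy p (fun ω => (A₀ ω, A₁ ω, B ω)) +
      jointEntropy p (fun ω => (C₀ ω, A₁ ω, B ω)) :=
    jointEntropy_submod p hp0 A₀ C₀ (fun ω => (A₁ ω, B ω))
  have S2 : jointEntropy p (fun ω => (A₀ ω, C₀ ω, B ω, C₁ ω)) +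
      jointEntropy p (fun ω => (B ω, C₁ ω)) ≤
      jointEntropy p (fun ω => (A₀ ω, B ω, C₁ ω)) +
      jointEntropy p (fun ω => (C₀ ω, B ω, C₁ ω)) :=
    jointEntropy_submod p hp0 A₀ C₀ (fun ω => (B ω, C₁ ω))
  have S3 : jointEntropy p (fun ω => (A₁ ω, B ω, A₀ ω)) + jointEntropy p A₀ ≤
      jointEntropy p (fun ω => (A₁ ω, A₀ ω)) + jointEntropy p (fun ω => (B ω, A₀ ω)) :=
    jointEntropy_submod p hp0 A₁ B A₀
  have S4 : jointEntropy p (fun ω => (A₁ ω, C₁ ω, A₀ ω, B ω, C₀ ω)) +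
      jointEntropy p (fun ω => (A₀ ω, B ω, C₀ ω)) ≤
      jointEntropy p (fun ω => (A₁ ω, A₀ ω, B ω, C₀ ω)) +
      jointEntropy p (fun ω => (C₁ ω, A₀ ω, B ω, C₀ ω)) :=
    jointEntropy_submod p hp0 A₁ C₁ (fun ω => (A₀ ω, B ω, C₀ ω))
  have S5 : jointEntropy p (fun ω => (B ω, C₁ ω, C₀ ω)) + jointEntropy p C₀ ≤
      jointEntropy p (fun ω => (B ω, C₀ ω)) + jointEntropy p (fun ω => (C₁ ω, C₀ ω)) :=
    jointEntropy_submod p hp0 B C₁ C₀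
  rw [e1, e2] at S1
  rw [e3, e4] at S2
  rw [e5, e6, e7] at S3
  rw [e8, e9, e10] at S4
  rw [e11, e12] at S5
  linarith [hind, hM, S1, S2, S3, S4, S5]
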